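/- Let P, Q be real symmetric m×m matrices with Q positive semidefinite and Q - P symmetric negative definite, and q ∈ ℝᵐ. Then the bifunction f(x,y) = ⟨Px + Qy + q, y - x⟩ is strongly pseudomonotone on every set C ⊆ ℝᵐ: there exists γ > 0 (the smallest eigenvalue of P - Q) such that f(x,y) ≥ 0 implies f(y,x) ≤ -γ‖x-y‖² for all x,y ∈ C. Moreover, f satisfies the Lipschitz-type condition f(x,y) + f(y,z) ≥ f(x,z) - ‖P-Q‖‖y-x‖‖z-y‖ for all x,y,z ∈ ℝᵐ. -/

import Mathlib

open scoped RealInnerProductSpace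

lemma posdef_coercive (m : ℕ) (A : Matrix (Fin m) (Fin m) ℝ) (hA : A.PosDef) :
    ∃ γ : ℝ, 0 < γ ∧ ∀ d : EuclideanSpace ℝ (Fin m),
      γ * ‖d‖ ^ 2 ≤ ⟪d, Matrix.toEuclideanCLM (𝕜 := ℝ) A d⟫ := by
  set T := Matrix.toEuclideanCLM (𝕜 := ℝ) A with hT
  have hpos : ∀ v : EuclideanSpace ℝ (Fin m), v ≠ 0 → 0 < ⟪v, T v⟫ := by
    intro v hv
    have hv' : (WithLp.equiv 2 (Fin m → ℝ)) v ≠ 0 := by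
      simpa using hv
    have := hA.dotProduct_mulVec_pos hv'
    simpa [hT, EuclideanSpace.inner_eq_star_dotProduct, Matrix.toLin'_apply, dotProduct_comm] using this
  have hcont : Continuous fun v : EuclideanSpace ℝ (Fin m) => ⟪v, T v⟫ :=
    continuous_id.inner T.continuous
  rcases Nat.eq_zero_or_pos m with hm | hm
  · refine ⟨1, one_pos, fun d => ?_⟩
    subst hm
    have : d = 0 := Subsingleton.elim _ _
    simp [this]
  · have : Nonempty (Fin m) := ⟨⟨0, hm⟩⟩
    have hne : (Metric.sphere (0 : EuclideanSpace ℝ (Fin m)) 1).Nonempty :=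
      NormedSpace.sphere_nonempty.2 zero_le_one
    obtain ⟨u₀, hu₀S, hmin⟩ :=
      (isCompact_sphere (0 : EuclideanSpace ℝ (Fin m)) 1).exists_isMinOn hne hcont.continuousOn
    have hu₀ : ‖u₀‖ = 1 := by simpa using hu₀S
    refine ⟨⟪u₀, T u₀⟫, hpos u₀ (by intro h; simp [h] at hu₀), fun d => ?_⟩
    rcases eq_or_ne d 0 with rfl | hd
    · simp
    · set c := ‖d‖ with hc
      have hcpos : 0 < c := norm_pos_iff.2 hd
      set u := c⁻¹ • d with hu
      have huS : u ∈ Metric.sphere (0 : EuclideanSpace ℝ (Fin m)) 1 := by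
        simp [hu, norm_smul, abs_of_pos hcpos, inv_mul_cancel₀ hcpos.ne']
        exact inv_mul_cancel₀ hcpos.ne'
      have hdu : d = c • u := by
        rw [hu, smul_smul, mul_inv_cancel₀ hcpos.ne', one_smul]
      have hq : ⟪d, T d⟫ = c ^ 2 * ⟪u, T u⟫ := by
        rw [hdu, map_smul, real_inner_smul_left, real_inner_smul_right]; ring
      have := hmin huS
      rw [hq]
      calc ⟪u₀, T u₀⟫ * c ^ 2 ≤ ⟪u, T u⟫ * c ^ 2 := by
            exact mul_le_mul_of_nonneg_right this (by positivity)
        _ = c ^ 2 * ⟪u, T u⟫ := by ring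

/-- The Nash–Cournot bifunction `f(x,y) = ⟨Px + Qy + q, y - x⟩` with `Q` positive
semidefinite and `Q - P` negative definite is strongly pseudomonotone and satisfies the
Lipschitz-type condition with constant `‖P - Q‖`. -/
theorem nash_cournot_bifunction_properties
    (m : ℕ) (P Q : Matrix (Fin m) (Fin m) ℝ) (q : EuclideanSpace ℝ (Fin m))
    (hPsymm : P.IsSymm) (hQsymm : Q.IsSymm) (hQpsd : Q.PosSemidef)
    (hnegdef : (P - Q).PosDef)
    (f : EuclideanSpace ℝ (Fin m) → EuclideanSpace ℝ (Fin m) → ℝ)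
    (hf : ∀ x y, f x y =
      ⟪((WithLp.equiv 2 (Fin m → ℝ)).symm (P.mulVec x + Q.mulVec y) + q), y - x⟫) :
    (∀ C : Set (EuclideanSpace ℝ (Fin m)), ∃ γ : ℝ, 0 < γ ∧
      ∀ x ∈ C, ∀ y ∈ C, 0 ≤ f x y → f y x ≤ -γ * ‖x - y‖ ^ 2) ∧
    (∀ x y z : EuclideanSpace ℝ (Fin m),
      f x y + f y z ≥ f x z - ‖Matrix.toEuclideanCLM (𝕜 := ℝ) (P - Q)‖ * ‖y - x‖ * ‖z - y‖) := by
  set a := Matrix.toEuclideanCLM (𝕜 := ℝ) P with ha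
  set b := Matrix.toEuclideanCLM (𝕜 := ℝ) Q with hb
  set T := Matrix.toEuclideanCLM (𝕜 := ℝ) (P - Q) with hT
  have hfe : ∀ x y, f x y = ⟪a x + b y + q, y - x⟫ := by
    intro x y; rw [hf]; rfl
  have hQh : Q.IsHermitian := by
    rwa [Matrix.IsHermitian, Matrix.conjTranspose_eq_transpose_of_trivial]
  have hbsym : ∀ u v : EuclideanSpace ℝ (Fin m), ⟪b u, v⟫ = ⟪b v, u⟫ := by
    intro u v
    have hs := Matrix.isHermitian_iff_isSymmetric.1 hQh
    have h1 : ⟪b u, v⟫ = ⟪u, b v⟫ := hs u v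
    rw [h1, real_inner_comm]
  have key1 : ∀ x y, f x y + f y x = -⟪T (x - y), x - y⟫ := by
    intro x y
    simp only [hfe, hT, map_sub, ContinuousLinearMap.sub_apply, ← ha, ← hb,
      inner_add_left, inner_sub_left, inner_sub_right]
    ring
  have key2 : ∀ x y z, f x y + f y z - f x z = ⟪T (y - x), z - y⟫ := by
    intro x y z
    simp only [hfe, hT, map_sub, ContinuousLinearMap.sub_apply, ← ha, ← hb,
      inner_add_left, inner_sub_left, inner_sub_right]
    rw [hbsym y x, hbsym z y, hbsym z x]
    ring
  constructor
  · intro C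
    obtain ⟨γ, hγpos, hcoer⟩ := posdef_coercive m (P - Q) hnegdef
    refine ⟨γ, hγpos, fun x _ y _ h0 => ?_⟩
    have h1 := key1 x y
    have h2 := hcoer (x - y)
    have h3 : ⟪T (x - y), x - y⟫ = ⟪x - y, T (x - y)⟫ := real_inner_comm _ _
    rw [h3] at h1
    have : f y x = -⟪x - y, T (x - y)⟫ - f x y := by linarith
    rw [this]
    have : -γ * ‖x - y‖ ^ 2 = -(γ * ‖x - y‖ ^ 2) := by ring
    rw [this]
    linarith
  · intro x y z
    have h1 := key2 x y z
    have h2 : |⟪T (y - x), z - y⟫| ≤ ‖T (y - x)‖ * ‖z - y‖ := abs_real_inner_le_norm _ _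
    have h3 : ‖T (y - x)‖ ≤ ‖T‖ * ‖y - x‖ := T.le_opNorm _
    have h4 : ‖T (y - x)‖ * ‖z - y‖ ≤ ‖T‖ * ‖y - x‖ * ‖z - y‖ :=
      mul_le_mul_of_nonneg_right h3 (norm_nonneg _)
    have h5 := neg_abs_le ⟪T (y - x), z - y⟫
    rw [ge_iff_le]
    linarith
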